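/- arXiv:1902.00947 — 4 statements merged into one kernel-verified Lean document; each statement's English description precedes it below -/
import Mathlib

section
/- Let f = E_i f_i with each f_i convex L-smooth, and suppose the variance at the minimizer is bounded: E_i‖f_i'(x⋆)‖² ≤ σ⋆². For the primal averaging scheme y_{k+1} = (d_k/(d_k + δ_k L)) y_k + (δ_k L/(d_k + δ_k L)) x_k, x_{k+1} = x_k - δ_k f'_{i_k}(y_{k+1}), with 0 ≤ δ_k < 1/L, d_{k+1} ≤ d_k + δ_k L, and e_k = δ_k² L/(2(1 - δ_k L)), one has d_{k+1}(f(y_{k+1}) - f⋆) + (L/2) E_{i_k}‖x_{k+1} - x⋆‖² ≤ d_k (f(y_k) - f⋆) + (L/2)‖x_k - x⋆‖² + e_k σ⋆². -/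
open Set RealInnerProductSpace

variable {E : Type*} [NormedAddCommGroup E] [InnerProductSpace ℝ E] [CompleteSpace E]

lemma line_hasDerivAt (φ : E → ℝ) (g : E → E) (hg : ∀ x, HasGradientAt φ (g x) x)
    (x y : E) (t : ℝ) :
    HasDerivAt (fun s : ℝ => φ (x + s • (y - x))) ⟪g (x + t • (y - x)), y - x⟫ t := by
  have h1 : HasDerivAt (fun s : ℝ => x + s • (y - x)) (y - x) t := by
    simpa using ((hasDerivAt_id t).smul_const (y - x)).const_add x
  have h2 := ((hg (x + t • (y - x))).hasFDerivAt.comp_hasDerivAt t h1)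
  simpa [InnerProductSpace.toDual_apply_apply, Function.comp_def] using h2

lemma convex_grad_ineq (φ : E → ℝ) (g : E → E) (hconv : ConvexOn ℝ Set.univ φ)
    (hg : ∀ x, HasGradientAt φ (g x) x) (x y : E) :
    φ x + ⟪g x, y - x⟫ ≤ φ y := by
  have hψconv : ConvexOn ℝ Set.univ (fun s : ℝ => φ (x + s • (y - x))) := by
    have := hconv.comp_affineMap (AffineMap.lineMap x y)
    simp only [Set.preimage_univ] at this
    refine this.congr fun s _ => ?_
    simp [AffineMap.lineMap_apply, add_comm]
  have hd := line_hasDerivAt φ g hg x y 0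
  have hs := hψconv.le_slope_of_hasDerivAt (Set.mem_univ (0:ℝ)) (Set.mem_univ (1:ℝ))
      one_pos hd
  simp only [slope_def_field] at hs
  simp only [zero_smul, add_zero, one_smul, add_sub_cancel] at hs
  norm_num at hs
  linarith [hs]

lemma descent_lemma (φ : E → ℝ) (g : E → E) (hg : ∀ x, HasGradientAt φ (g x) x)
    (L : ℝ) (hL : 0 < L) (hlip : ∀ a b, ‖g a - g b‖ ≤ L * ‖a - b‖) (x y : E) :
    φ y ≤ φ x + ⟪g x, y - x⟫ + L / 2 * ‖y - x‖ ^ 2 := by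
  set ψ : ℝ → ℝ := fun t => φ (x + t • (y - x)) - t * ⟪g x, y - x⟫
      - (L / 2 * ‖y - x‖ ^ 2) * t ^ 2 with hψ
  have hψd : ∀ t : ℝ, HasDerivAt ψ
      (⟪g (x + t • (y - x)), y - x⟫ - ⟪g x, y - x⟫ - (L * ‖y - x‖ ^ 2) * t) t := by
    intro t
    have h1 := line_hasDerivAt φ g hg x y t
    have h2 : HasDerivAt (fun t : ℝ => t * ⟪g x, y - x⟫) ⟪g x, y - x⟫ t := by
      simpa using (hasDerivAt_id t).mul_const ⟪g x, y - x⟫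
    have h3 : HasDerivAt (fun t : ℝ => (L / 2 * ‖y - x‖ ^ 2) * t ^ 2)
        ((L / 2 * ‖y - x‖ ^ 2) * (2 * t)) t := by
      simpa using (hasDerivAt_pow 2 t).const_mul (L / 2 * ‖y - x‖ ^ 2)
    have := (h1.sub h2).sub h3
    exact this.congr_deriv (by ring)
  have hanti : AntitoneOn ψ (Icc 0 1) := by
    apply antitoneOn_of_deriv_nonpos (convex_Icc 0 1)
    · have : Differentiable ℝ ψ := fun t => (hψd t).differentiableAt
      exact this.continuous.continuousOn
    · intro t ht
      exact (hψd t).differentiableAt.differentiableWithinAt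
    · intro t ht
      rw [interior_Icc] at ht
      rw [(hψd t).deriv]
      have hb : ⟪g (x + t • (y - x)) - g x, y - x⟫ ≤ L * t * ‖y - x‖ ^ 2 := by
        calc ⟪g (x + t • (y - x)) - g x, y - x⟫ ≤ ‖g (x + t • (y - x)) - g x‖ * ‖y - x‖ :=
              real_inner_le_norm _ _
          _ ≤ (L * ‖(x + t • (y - x)) - x‖) * ‖y - x‖ := by
              have := hlip (x + t • (y - x)) x
              exact mul_le_mul_of_nonneg_right this (norm_nonneg _)
          _ = L * t * ‖y - x‖ ^ 2 := by
              rw [add_sub_cancel_left, norm_smul, Real.norm_eq_abs, abs_of_pos ht.1]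
              ring
      rw [inner_sub_left] at hb
      linarith
  have h01 := hanti (Set.left_mem_Icc.2 zero_le_one) (Set.right_mem_Icc.2 zero_le_one) zero_le_one
  simp only [hψ] at h01
  norm_num at h01
  linarith

lemma interp_lemma (φ : E → ℝ) (g : E → E) (hconv : ConvexOn ℝ Set.univ φ)
    (hg : ∀ x, HasGradientAt φ (g x) x)
    (L : ℝ) (hL : 0 < L) (hlip : ∀ a b, ‖g a - g b‖ ≤ L * ‖a - b‖) (x y : E) :
    ‖g y - g x‖ ^ 2 ≤ 2 * L * (φ y - φ x - ⟪g x, y - x⟫) := by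
  set Δ : E := g y - g x with hΔ
  set z : E := y - L⁻¹ • Δ with hz
  have h1 := descent_lemma φ g hg L hL hlip y z
  have h2 := convex_grad_ineq φ g hconv hg x z
  have e1 : z - y = -(L⁻¹ • Δ) := by rw [hz]; abel
  have e2 : z - x = (y - x) - L⁻¹ • Δ := by rw [hz]; abel
  have e3 : ⟪g y, z - y⟫ = -(L⁻¹ * ⟪g y, Δ⟫) := by
    rw [e1, inner_neg_right, real_inner_smul_right]
  have e4 : ‖z - y‖ ^ 2 = (L⁻¹) ^ 2 * ‖Δ‖ ^ 2 := by
    rw [e1, norm_neg, norm_smul, Real.norm_eq_abs, mul_pow, sq_abs]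
  have e5 : ⟪g x, z - x⟫ = ⟪g x, y - x⟫ - L⁻¹ * ⟪g x, Δ⟫ := by
    rw [e2, inner_sub_right, real_inner_smul_right]
  have e6 : ⟪g y, Δ⟫ - ⟪g x, Δ⟫ = ‖Δ‖ ^ 2 := by
    rw [← inner_sub_left, ← hΔ, real_inner_self_eq_norm_sq]
  rw [e3, e4] at h1
  rw [e5] at h2
  have h3 : L⁻¹ * ‖Δ‖ ^ 2 - L / 2 * ((L⁻¹) ^ 2 * ‖Δ‖ ^ 2)
      ≤ φ y - φ x - ⟪g x, y - x⟫ := by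
    have e7 : L⁻¹ * ⟪g y, Δ⟫ - L⁻¹ * ⟪g x, Δ⟫ = L⁻¹ * ‖Δ‖ ^ 2 := by
      linear_combination L⁻¹ * e6
    linarith [h1, h2, e7]
  have h4 : L⁻¹ * ‖Δ‖ ^ 2 - L / 2 * ((L⁻¹) ^ 2 * ‖Δ‖ ^ 2) = ‖Δ‖ ^ 2 / (2 * L) := by
    field_simp
    ring
  rw [h4] at h3
  rw [div_le_iff₀ (by positivity : (0:ℝ) < 2 * L)] at h3
  linarith

open Finset

set_option maxHeartbeats 2000000

/-- One-step potential inequality for primal-averaging SGD on a finite sum with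
bounded variance at the optimum. -/
theorem var_at_opt_primal_averaging_potential {d n : ℕ} (hn : 0 < n)
    (L σstar : ℝ) (hL : 0 < L)
    (fi : Fin n → EuclideanSpace ℝ (Fin d) → ℝ)
    (fi' : Fin n → EuclideanSpace ℝ (Fin d) → EuclideanSpace ℝ (Fin d))
    (hgrad : ∀ i x, HasGradientAt (fi i) (fi' i x) x)
    (hconv : ∀ i, ConvexOn ℝ Set.univ (fi i))
    (hsmooth : ∀ i x y, ‖fi' i x - fi' i y‖ ≤ L * ‖x - y‖)
    (f : EuclideanSpace ℝ (Fin d) → ℝ)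
    (hf : ∀ x, f x = (n : ℝ)⁻¹ * ∑ i, fi i x)
    (xstar : EuclideanSpace ℝ (Fin d)) (hmin : ∀ y, f xstar ≤ f y)
    (hvar : (n : ℝ)⁻¹ * (∑ i, ‖fi' i xstar‖ ^ 2) ≤ σstar ^ 2)
    (δ dk d1 : ℝ) (hδ0 : 0 ≤ δ) (hδ1 : δ < 1 / L) (hdk : 0 ≤ dk)
    (hd1 : d1 ≤ dk + δ * L)
    (xk yk y1 : EuclideanSpace ℝ (Fin d))
    (hy1 : y1 = (dk / (dk + δ * L)) • yk + (δ * L / (dk + δ * L)) • xk)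
    (x1 : Fin n → EuclideanSpace ℝ (Fin d))
    (hx1 : ∀ i, x1 i = xk - δ • fi' i y1) :
    d1 * (f y1 - f xstar)
        + L / 2 * ((n : ℝ)⁻¹ * ∑ i, ‖x1 i - xstar‖ ^ 2)
      ≤ dk * (f yk - f xstar) + L / 2 * ‖xk - xstar‖ ^ 2
        + (δ ^ 2 * L / (2 * (1 - δ * L))) * σstar ^ 2 := by
  have ht0 : 0 ≤ δ * L := mul_nonneg hδ0 hL.le
  have ht1 : δ * L < 1 := by
    rw [lt_div_iff₀ hL] at hδ1; linarith
  have h1t : 0 < 1 - δ * L := by linarith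
  set e : ℝ := δ ^ 2 * L / (2 * (1 - δ * L)) with he
  have he0 : 0 ≤ e := by positivity
  -- vector identity
  have hvec : (δ * L) • (xk - xstar) = (δ * L) • (y1 - xstar) + dk • (y1 - yk) := by
    rcases eq_or_ne (dk + δ * L) 0 with h0 | h0
    · have hd0 : dk = 0 := by linarith
      have ht00 : δ * L = 0 := by linarith
      simp [hd0, ht00]
    · rw [hy1]
      match_scalars <;> field_simp <;> ring
  -- per-sample inequality
  have hstar : ∀ i : Fin n,
      L / 2 * ‖x1 i - xstar‖ ^ 2 + (dk + δ * L) * (fi i y1 - fi i xstar)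
        ≤ L / 2 * ‖xk - xstar‖ ^ 2 + dk * (fi i yk - fi i xstar)
          + e * ‖fi' i xstar‖ ^ 2 := by
    intro i
    set gi : EuclideanSpace ℝ (Fin d) := fi' i y1 with hgi
    set gs : EuclideanSpace ℝ (Fin d) := fi' i xstar with hgs
    have hexp : ‖x1 i - xstar‖ ^ 2
        = ‖xk - xstar‖ ^ 2 - 2 * δ * ⟪xk - xstar, gi⟫ + δ ^ 2 * ‖gi‖ ^ 2 := by
      rw [hx1 i, show xk - δ • gi - xstar = (xk - xstar) - δ • gi from by abel,
        norm_sub_sq_real, real_inner_smul_right, norm_smul, Real.norm_eq_abs,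
        abs_of_nonneg hδ0]
      ring
    have hc : (⟪gi, xk - xstar⟫ : ℝ) = ⟪xk - xstar, gi⟫ := real_inner_comm _ _
    have f1 : L / 2 * ‖x1 i - xstar‖ ^ 2
        = L / 2 * ‖xk - xstar‖ ^ 2 - (δ * L) * ⟪gi, xk - xstar⟫
          + δ ^ 2 * L / 2 * ‖gi‖ ^ 2 := by
      linear_combination (L / 2) * hexp + (δ * L) * hc
    have hP : (δ * L) * ⟪gi, xk - xstar⟫
        = (δ * L) * ⟪gi, y1 - xstar⟫ - dk * ⟪gi, yk - y1⟫ := by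
      have h := congrArg (fun v : EuclideanSpace ℝ (Fin d) => (⟪gi, v⟫ : ℝ)) hvec
      simp only [inner_add_right, inner_sub_right, real_inner_smul_right] at h
      simp only [inner_sub_right]
      linarith [h]
    have hQ := interp_lemma (fi i) (fi' i) (hconv i) (hgrad i) L hL (hsmooth i) y1 xstar
    rw [norm_sub_rev] at hQ
    have hQ' : ‖gi - gs‖ ^ 2
        ≤ 2 * L * (fi i xstar - fi i y1) + 2 * L * ⟪gi, y1 - xstar⟫ := by
      rw [show xstar - y1 = -(y1 - xstar) from by abel, inner_neg_right] at hQ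
      linarith [hQ]
    have f3 := mul_le_mul_of_nonneg_left hQ' (by linarith : (0:ℝ) ≤ δ / 2)
    have hR := convex_grad_ineq (fi i) (fi' i) (hconv i) (hgrad i) y1 yk
    have f4 := mul_le_mul_of_nonneg_left
      (by linarith [hR] : (⟪gi, yk - y1⟫ : ℝ) ≤ fi i yk - fi i y1) hdk
    -- Young inequality
    have tri : ‖gi‖ ≤ ‖gi - gs‖ + ‖gs‖ := by
      simpa using norm_add_le (gi - gs) gs
    have hW2 : ‖gi‖ ^ 2 ≤ (‖gi - gs‖ + ‖gs‖) ^ 2 := by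
      nlinarith [tri, norm_nonneg gi]
    have key : (δ * L) * (1 - δ * L) * ‖gi‖ ^ 2
        ≤ (1 - δ * L) * ‖gi - gs‖ ^ 2 + (δ * L) * ‖gs‖ ^ 2 := by
      nlinarith [sq_nonneg ((1 - δ * L) * ‖gi - gs‖ - (δ * L) * ‖gs‖),
        mul_le_mul_of_nonneg_left hW2 (mul_nonneg ht0 h1t.le)]
    have key2 := mul_le_mul_of_nonneg_left key hδ0
    have hY : δ ^ 2 * L / 2 * ‖gi‖ ^ 2 ≤ δ / 2 * ‖gi - gs‖ ^ 2 + e * ‖gs‖ ^ 2 := by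
      rw [← sub_nonneg]
      have expand : δ / 2 * ‖gi - gs‖ ^ 2 + e * ‖gs‖ ^ 2 - δ ^ 2 * L / 2 * ‖gi‖ ^ 2
          = (δ * ((1 - δ * L) * ‖gi - gs‖ ^ 2 + (δ * L) * ‖gs‖ ^ 2)
              - δ * ((δ * L) * (1 - δ * L) * ‖gi‖ ^ 2)) / (2 * (1 - δ * L)) := by
        rw [he]; field_simp
      rw [expand]
      exact div_nonneg (by linarith [key2]) (by linarith)
    linarith [f1, hP, f3, f4, hY]
  -- summation
  have hsum := Finset.sum_le_sum (fun i (_ : i ∈ Finset.univ) => hstar i)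
  simp only [Finset.sum_add_distrib, ← Finset.mul_sum, Finset.sum_sub_distrib,
    Finset.sum_const, Finset.card_univ, Fintype.card_fin, nsmul_eq_mul,
    mul_sub] at hsum
  have hni : (0:ℝ) ≤ (n : ℝ)⁻¹ := by positivity
  have hmul := mul_le_mul_of_nonneg_left hsum hni
  have hkey : (n:ℝ)⁻¹ * ((n:ℝ) * (L / 2 * ‖xk - xstar‖ ^ 2)) = L / 2 * ‖xk - xstar‖ ^ 2 := by
    field_simp
  rw [hf y1, hf yk, hf xstar]
  have hF : 0 ≤ (n:ℝ)⁻¹ * (∑ i, fi i y1) - (n:ℝ)⁻¹ * (∑ i, fi i xstar) := by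
    have := hmin y1
    rw [hf y1, hf xstar] at this
    linarith
  have hd1F := mul_le_mul_of_nonneg_right hd1 hF
  have hvar' := mul_le_mul_of_nonneg_left hvar he0
  linarith [hmul, hkey, hd1F, hvar']
end

section
/- Let f : ℝ^d → ℝ be L-smooth and μ-strongly convex (0 < μ ≤ L) with minimizer x⋆, with coordinates partitioned into n blocks via projections U_1, …, U_n summing to the identity. For randomized block-coordinate descent x_{k+1} = x_k - δ_k U_{i_k} f'(x_k) with i_k uniform on {1,…,n}, E_{i_k}‖x_{k+1} - x⋆‖² ≤ ρ² ‖x_k - x⋆‖², where ρ² = max{ ((δ_k μ - 1)² + n - 1)/n, ((δ_k L - 1)² + n - 1)/n }. -/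
open Finset



open Set InnerProductSpace RealInnerProductSpace

variable {E : Type*} [NormedAddCommGroup E] [InnerProductSpace ℝ E] [CompleteSpace E]

/-- derivative along a line -/
lemma bcd_lineDeriv {g : E → ℝ} {g' : E → E} (hg : ∀ p, HasGradientAt g (g' p) p)
    (y v : E) (t : ℝ) :
    HasDerivAt (fun s : ℝ => g (y + s • v)) ⟪g' (y + t • v), v⟫_ℝ t := by
  have h1 : HasDerivAt (fun s : ℝ => y + s • v) v t := by
    simpa using ((hasDerivAt_id t).smul_const v).const_add y
  have h2 := ((hg (y + t • v)).hasFDerivAt.comp_hasDerivAt t h1)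
  simp [InnerProductSpace.toDual_apply_apply] at h2
  exact h2

/-- gradient inequality for convex functions -/
lemma bcd_grad_ineq {g : E → ℝ} {g' : E → E} (hg : ∀ p, HasGradientAt g (g' p) p)
    (hc : ConvexOn ℝ Set.univ g) (y z : E) :
    g y + ⟪g' y, z - y⟫_ℝ ≤ g z := by
  set v := z - y with hv
  have hφ : ConvexOn ℝ Set.univ (fun t : ℝ => g (y + t • v)) := by
    have h1 := hc.comp_affineMap (AffineMap.lineMap y z)
    have h2 : ((fun x => g x) ∘ (AffineMap.lineMap y z : ℝ →ᵃ[ℝ] E))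
        = fun t : ℝ => g (y + t • v) := by
      funext t
      simp only [Function.comp, AffineMap.lineMap_apply_module, hv]
      congr 1
      module
    rw [h2] at h1
    simpa using h1
  have hd : HasDerivAt (fun t : ℝ => g (y + t • v)) ⟪g' y, v⟫_ℝ 0 := by
    have := bcd_lineDeriv hg y v 0
    simpa using this
  have hs := hφ.le_slope_of_hasDerivAt (Set.mem_univ (0:ℝ)) (Set.mem_univ (1:ℝ)) one_pos hd
  have h1 : slope (fun t : ℝ => g (y + t • v)) 0 1 = g z - g y := by
    simp [slope_def_field, hv]
  rw [h1] at hs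
  linarith

/-- monotonicity of gradient of convex function -/
lemma bcd_monotone_grad {g : E → ℝ} {g' : E → E} (hg : ∀ p, HasGradientAt g (g' p) p)
    (hc : ConvexOn ℝ Set.univ g) (x y : E) :
    0 ≤ ⟪g' x - g' y, x - y⟫_ℝ := by
  have A1 := bcd_grad_ineq hg hc x y
  have A2 := bcd_grad_ineq hg hc y x
  have h1 : ⟪g' x, y - x⟫_ℝ = -⟪g' x, x - y⟫_ℝ := by
    rw [← inner_neg_right]; congr 1; abel
  rw [inner_sub_left]
  have h2 : ⟪g' x, x - y⟫_ℝ - ⟪g' y, x - y⟫_ℝ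
      = -(⟪g' x, y - x⟫_ℝ + ⟪g' y, x - y⟫_ℝ) := by rw [h1]; ring
  rw [h2]
  linarith

/-- convexity of L/2‖x‖² - f for L-smooth f -/
lemma bcd_smooth_conv {f : E → ℝ} {f' : E → E} (hg : ∀ p, HasGradientAt f (f' p) p)
    {L : ℝ} (hsm : ∀ x y, ‖f' x - f' y‖ ≤ L * ‖x - y‖) :
    ConvexOn ℝ Set.univ (fun x => L / 2 * ‖x‖ ^ 2 - f x) := by
  refine ⟨convex_univ, ?_⟩
  rintro x - z - a b ha hb hab
  set v := z - x with hv
  set ψ : ℝ → ℝ := fun t => L / 2 * ‖x + t • v‖ ^ 2 - f (x + t • v) with hψ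
  set c : ℝ → ℝ := fun t => L * ⟪x + t • v, v⟫_ℝ - ⟪f' (x + t • v), v⟫_ℝ with hcdef
  have hψd : ∀ t, HasDerivAt ψ (c t) t := by
    intro t
    have h1 : HasDerivAt (fun s : ℝ => x + s • v) v t := by
      simpa using ((hasDerivAt_id t).smul_const v).const_add x
    have h2 := (h1.norm_sq).const_mul (L / 2)
    have h3 := bcd_lineDeriv hg x v t
    have h4 := h2.sub h3
    rw [show c t = L / 2 * (2 * ⟪x + t • v, v⟫_ℝ) - ⟪f' (x + t • v), v⟫_ℝ by
      simp only [hcdef]; ring]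
    exact h4
  have hmono : Monotone c := by
    intro s t hst
    have hkey : ⟪f' (x + t • v) - f' (x + s • v), v⟫_ℝ ≤ L * (t - s) * ‖v‖ ^ 2 := by
      calc ⟪f' (x + t • v) - f' (x + s • v), v⟫_ℝ
          ≤ ‖f' (x + t • v) - f' (x + s • v)‖ * ‖v‖ := real_inner_le_norm _ _
        _ ≤ (L * ‖(x + t • v) - (x + s • v)‖) * ‖v‖ := by
            apply mul_le_mul_of_nonneg_right (hsm _ _) (norm_nonneg v)
        _ = L * (t - s) * ‖v‖ ^ 2 := by
            have : (x + t • v) - (x + s • v) = (t - s) • v := by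
              rw [sub_smul]; abel
            rw [this, norm_smul, Real.norm_eq_abs, abs_of_nonneg (by linarith)]
            ring
    have h5 : ⟪x + t • v, v⟫_ℝ - ⟪x + s • v, v⟫_ℝ = (t - s) * ‖v‖ ^ 2 := by
      rw [inner_add_left, inner_add_left, real_inner_smul_left, real_inner_smul_left,
        real_inner_self_eq_norm_sq]
      ring
    have h6 : ⟪f' (x + t • v), v⟫_ℝ - ⟪f' (x + s • v), v⟫_ℝ
        = ⟪f' (x + t • v) - f' (x + s • v), v⟫_ℝ := by rw [inner_sub_left]
    have h7 : L * (⟪x + t • v, v⟫_ℝ - ⟪x + s • v, v⟫_ℝ) = L * ((t - s) * ‖v‖ ^ 2) := by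
      rw [h5]
    simp only [hcdef]
    nlinarith [hkey, h6, h7]
  have hψc : ConvexOn ℝ Set.univ ψ := by
    have hdiff : Differentiable ℝ ψ := fun t => (hψd t).differentiableAt
    have hder : deriv ψ = c := funext fun t => (hψd t).deriv
    exact Monotone.convexOn_univ_of_deriv hdiff (hder ▸ hmono)
  have hcomb := hψc.2 (Set.mem_univ (0:ℝ)) (Set.mem_univ (1:ℝ)) ha hb hab
  have e0 : ψ (a * 0 + b * 1) = L / 2 * ‖a • x + b • z‖ ^ 2 - f (a • x + b • z) := by
    have hx : x + (a * 0 + b * 1) • v = a • x + b • z := by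
      simp only [hv]
      have : a = 1 - b := by linarith
      rw [this]; module
    simp only [hψ, hx]
  have e1 : ψ 0 = L / 2 * ‖x‖ ^ 2 - f x := by simp [hψ]
  have e2 : ψ 1 = L / 2 * ‖z‖ ^ 2 - f z := by simp [hψ, hv]
  simp only [smul_eq_mul] at hcomb
  rw [e0, e1, e2] at hcomb
  simpa using hcomb

lemma bcd_grad_quad_sub {g : E → ℝ} {g' : E → E} (hg : ∀ p, HasGradientAt g (g' p) p)
    (M : ℝ) (p : E) :
    HasGradientAt (fun x => M / 2 * ‖x‖ ^ 2 - g x) (M • p - g' p) p := by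
  have h1 : HasFDerivAt (fun x : E => ‖x‖ ^ 2) (2 • (innerSL ℝ p)) p :=
    (hasStrictFDerivAt_norm_sq p).hasFDerivAt
  have h2 := (h1.const_mul (M / 2)).sub (hg p).hasFDerivAt
  have h3 : (InnerProductSpace.toDual ℝ E) (M • p - g' p)
      = (M / 2) • (2 • (innerSL ℝ p)) - (InnerProductSpace.toDual ℝ E) (g' p) := by
    ext v
    simp [InnerProductSpace.toDual_apply_apply, inner_sub_left, real_inner_smul_left]
    ring
  rw [hasGradientAt_iff_hasFDerivAt, h3]
  exact h2

/-- cocoercivity -/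
lemma bcd_cocoercive {g : E → ℝ} {g' : E → E} {M : ℝ} (hM : 0 < M)
    (hg : ∀ p, HasGradientAt g (g' p) p) (hc : ConvexOn ℝ Set.univ g)
    (hq : ConvexOn ℝ Set.univ (fun x => M / 2 * ‖x‖ ^ 2 - g x)) (x y : E) :
    ‖g' x - g' y‖ ^ 2 ≤ M * ⟪g' x - g' y, x - y⟫_ℝ := by
  have hM0 : M ≠ 0 := ne_of_gt hM
  have hB : ∀ p z : E, g z ≤ g p + ⟪g' p, z - p⟫_ℝ + M / 2 * ‖z - p‖ ^ 2 := by
    intro p z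
    have h1 := bcd_grad_ineq (bcd_grad_quad_sub hg M) hq p z
    have h2 : ⟪M • p - g' p, z - p⟫_ℝ = M * ⟪p, z - p⟫_ℝ - ⟪g' p, z - p⟫_ℝ := by
      rw [inner_sub_left, real_inner_smul_left]
    have h3 : ‖z - p‖ ^ 2 = ‖z‖ ^ 2 - 2 * ⟪z, p⟫_ℝ + ‖p‖ ^ 2 := norm_sub_sq_real z p
    have h4 : ⟪p, z - p⟫_ℝ = ⟪z, p⟫_ℝ - ‖p‖ ^ 2 := by
      rw [inner_sub_right, real_inner_self_eq_norm_sq, real_inner_comm]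
    nlinarith [h1, h2, h3, h4]
  have hCkey : ∀ a b : E, g a + ⟪g' a, b - a⟫_ℝ + 1 / (2 * M) * ‖g' b - g' a‖ ^ 2 ≤ g b := by
    intro a b
    set w := g' b - g' a with hw
    set z := b - M⁻¹ • w with hzdef
    have hA := bcd_grad_ineq hg hc a z
    have hBB := hB b z
    have hz : z - b = -(M⁻¹ • w) := by rw [hzdef]; abel
    have h1 : ⟪g' b, z - b⟫_ℝ = -(M⁻¹ * ⟪g' b, w⟫_ℝ) := by
      rw [hz, inner_neg_right, real_inner_smul_right]
    have h2 : ‖z - b‖ ^ 2 = M⁻¹ ^ 2 * ‖w‖ ^ 2 := by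
      rw [hz, norm_neg, norm_smul, Real.norm_eq_abs, mul_pow, sq_abs]
    have h3 : ⟪g' a, z - a⟫_ℝ = ⟪g' a, b - a⟫_ℝ - M⁻¹ * ⟪g' a, w⟫_ℝ := by
      have : z - a = (b - a) - M⁻¹ • w := by rw [hzdef]; abel
      rw [this, inner_sub_right, real_inner_smul_right]
    have h4 : ⟪g' b, w⟫_ℝ - ⟪g' a, w⟫_ℝ = ‖w‖ ^ 2 := by
      rw [← inner_sub_left, ← hw, real_inner_self_eq_norm_sq]
    have h5 : M / 2 * (M⁻¹ ^ 2 * ‖w‖ ^ 2) = 1 / (2 * M) * ‖w‖ ^ 2 := by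
      field_simp
    have h6 : M⁻¹ * ⟪g' b, w⟫_ℝ - M⁻¹ * ⟪g' a, w⟫_ℝ = M⁻¹ * ‖w‖ ^ 2 := by
      rw [← mul_sub, h4]
    have h7 : M⁻¹ * ‖w‖ ^ 2 - 1 / (2 * M) * ‖w‖ ^ 2 = 1 / (2 * M) * ‖w‖ ^ 2 := by
      field_simp; ring
    have h2' : M / 2 * ‖z - b‖ ^ 2 = 1 / (2 * M) * ‖w‖ ^ 2 := by rw [h2]; exact h5
    linarith [hA, hBB, h1, h2', h3, h6, h7]
  have c1 := hCkey x y
  have c2 := hCkey y x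
  have e1 : ⟪g' x, y - x⟫_ℝ = -⟪g' x, x - y⟫_ℝ := by
    rw [← inner_neg_right]; congr 1; abel
  have e3 : ⟪g' x - g' y, x - y⟫_ℝ = ⟪g' x, x - y⟫_ℝ - ⟪g' y, x - y⟫_ℝ := inner_sub_left _ _ _
  have h9 : 1 / (2 * M) * ‖g' y - g' x‖ ^ 2 + 1 / (2 * M) * ‖g' x - g' y‖ ^ 2
      ≤ ⟪g' x - g' y, x - y⟫_ℝ := by linarith [c1, c2, e1, e3]
  have h10 : ‖g' y - g' x‖ = ‖g' x - g' y‖ := norm_sub_rev _ _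
  rw [h10] at h9
  have h11 := mul_le_mul_of_nonneg_left h9 hM.le
  have h12 : M * (1 / (2 * M) * ‖g' x - g' y‖ ^ 2 + 1 / (2 * M) * ‖g' x - g' y‖ ^ 2)
      = ‖g' x - g' y‖ ^ 2 := by field_simp; ring
  linarith [h11, h12]

set_option maxHeartbeats 1000000 in
/-- Linear contraction of randomized block-coordinate descent on an L-smooth
μ-strongly convex function. -/
theorem block_coordinate_descent_strongly_convex {d n : ℕ} (hn : 0 < n)
    (L μ : ℝ) (hμ : 0 < μ) (hμL : μ ≤ L)
    (f : EuclideanSpace ℝ (Fin d) → ℝ)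
    (f' : EuclideanSpace ℝ (Fin d) → EuclideanSpace ℝ (Fin d))
    (hgrad : ∀ x, HasGradientAt f (f' x) x)
    (hsc : ConvexOn ℝ Set.univ (fun x => f x - μ / 2 * ‖x‖ ^ 2))
    (hsmooth : ∀ x y, ‖f' x - f' y‖ ≤ L * ‖x - y‖)
    (xstar : EuclideanSpace ℝ (Fin d)) (hmin : ∀ y, f xstar ≤ f y)
    (U : Fin n → EuclideanSpace ℝ (Fin d) →L[ℝ] EuclideanSpace ℝ (Fin d))
    (hUproj : ∀ i x, U i (U i x) = U i x)
    (hUsum : ∀ x, ∑ i, U i x = x)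
    (hUpyth : ∀ x, ∑ i, ‖U i x‖ ^ 2 = ‖x‖ ^ 2)
    (δ : ℝ) (hδ : 0 ≤ δ)
    (xk : EuclideanSpace ℝ (Fin d))
    (x1 : Fin n → EuclideanSpace ℝ (Fin d))
    (hx1 : ∀ i, x1 i = xk - δ • U i (f' xk)) :
    (n : ℝ)⁻¹ * (∑ i, ‖x1 i - xstar‖ ^ 2)
      ≤ max (((δ * μ - 1) ^ 2 + (n : ℝ) - 1) / (n : ℝ))
            (((δ * L - 1) ^ 2 + (n : ℝ) - 1) / (n : ℝ)) * ‖xk - xstar‖ ^ 2 := by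
  have hnpos : (0:ℝ) < n := by exact_mod_cast hn
  set N : ℝ := ‖xk - xstar‖ ^ 2 with hN
  set G : ℝ := ‖f' xk‖ ^ 2 with hG
  set a : ℝ := ⟪f' xk, xk - xstar⟫_ℝ with ha
  have hN0 : 0 ≤ N := by positivity
  have hG0 : 0 ≤ G := by positivity
  -- gradient at minimizer vanishes
  have hfs0 : f' xstar = 0 := by
    have hloc : IsLocalMin f xstar := Filter.Eventually.of_forall hmin
    have hD := hloc.hasFDerivAt_eq_zero (hgrad xstar).hasFDerivAt
    apply (InnerProductSpace.toDual ℝ (EuclideanSpace ℝ (Fin d))).injective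
    rw [hD]; simp
  -- gradient of the shifted function
  have hgradh : ∀ p, HasGradientAt (fun x => f x - μ / 2 * ‖x‖ ^ 2) (f' p - μ • p) p := by
    intro p
    have h1 : HasFDerivAt (fun x : EuclideanSpace ℝ (Fin d) => ‖x‖ ^ 2)
        (2 • (innerSL ℝ p)) p := (hasStrictFDerivAt_norm_sq p).hasFDerivAt
    have h2 := (hgrad p).hasFDerivAt.sub (h1.const_mul (μ / 2))
    have h3 : (InnerProductSpace.toDual ℝ (EuclideanSpace ℝ (Fin d))) (f' p - μ • p)
        = (InnerProductSpace.toDual ℝ (EuclideanSpace ℝ (Fin d))) (f' p)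
          - (μ / 2) • (2 • (innerSL ℝ p)) := by
      ext v
      simp [InnerProductSpace.toDual_apply_apply, inner_sub_left, real_inner_smul_left]
      ring
    rw [hasGradientAt_iff_hasFDerivAt, h3]
    exact h2
  have hvec : (f' xk - μ • xk) - (f' xstar - μ • xstar) = f' xk - μ • (xk - xstar) := by
    rw [hfs0]; module
  have hinner1 : ⟪f' xk - μ • (xk - xstar), xk - xstar⟫_ℝ = a - μ * N := by
    rw [inner_sub_left, real_inner_smul_left, real_inner_self_eq_norm_sq]
  -- F1 : strong convexity monotonicity
  have F1 : μ * N ≤ a := by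
    have h := bcd_monotone_grad hgradh hsc xk xstar
    rw [hvec, hinner1] at h
    linarith
  -- F2 : smoothness bound
  have F2 : G ≤ L ^ 2 * N := by
    have h := hsmooth xk xstar
    rw [hfs0, sub_zero] at h
    have h2 := mul_self_le_mul_self (norm_nonneg (f' xk)) h
    rw [hN, hG]
    nlinarith [norm_nonneg (xk - xstar), norm_nonneg (f' xk)]
  -- Fμ : lower bound on gradient norm
  have Fmu : μ ^ 2 * N ≤ G := by
    rcases eq_or_lt_of_le hN0 with h0 | h0
    · rw [← h0]; simpa using hG0
    · have hcs : a ≤ ‖f' xk‖ * ‖xk - xstar‖ := real_inner_le_norm _ _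
      have h1 : μ * N ≤ ‖f' xk‖ * ‖xk - xstar‖ := le_trans F1 hcs
      have h2 : (μ * N) ^ 2 ≤ (‖f' xk‖ * ‖xk - xstar‖) ^ 2 :=
        pow_le_pow_left₀ (by positivity) h1 2
      have h3 : (‖f' xk‖ * ‖xk - xstar‖) ^ 2 = G * N := by rw [hG, hN]; ring
      rw [h3] at h2
      nlinarith [h2, h0]
  -- F3 : cocoercivity combined
  have F3 : G + μ * L * N ≤ (μ + L) * a := by
    rcases eq_or_lt_of_le hμL with heq | hlt
    · subst heq
      nlinarith [mul_le_mul_of_nonneg_left F1 hμ.le, F2]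
    · have hM : 0 < L - μ := by linarith
      have hqc : ConvexOn ℝ Set.univ
          (fun x => (L - μ) / 2 * ‖x‖ ^ 2 - (f x - μ / 2 * ‖x‖ ^ 2)) := by
        have h1 := bcd_smooth_conv hgrad hsmooth
        have h2 : (fun x : EuclideanSpace ℝ (Fin d) =>
            (L - μ) / 2 * ‖x‖ ^ 2 - (f x - μ / 2 * ‖x‖ ^ 2))
            = fun x => L / 2 * ‖x‖ ^ 2 - f x := by funext x; ring
        rw [h2]; exact h1
      have hco := bcd_cocoercive hM hgradh hsc hqc xk xstar
      rw [hvec, hinner1] at hco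
      have hnsq : ‖f' xk - μ • (xk - xstar)‖ ^ 2 = G - 2 * (μ * a) + μ ^ 2 * N := by
        rw [norm_sub_sq_real, real_inner_smul_right, norm_smul, Real.norm_eq_abs,
          mul_pow, sq_abs, hG, hN]
      rw [hnsq] at hco
      nlinarith [hco]
  -- key contraction for full gradient step
  have hT : ‖(xk - xstar) - δ • (f' xk)‖ ^ 2 = N - 2 * (δ * a) + δ ^ 2 * G := by
    rw [norm_sub_sq_real, real_inner_smul_right, norm_smul, Real.norm_eq_abs, mul_pow,
      sq_abs, hN, hG, real_inner_comm]
  have key : ‖(xk - xstar) - δ • (f' xk)‖ ^ 2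
      ≤ max ((δ * μ - 1) ^ 2) ((δ * L - 1) ^ 2) * N := by
    rcases le_total (δ * (μ + L)) 2 with hc1 | hc1
    · have hkey1 : ‖(xk - xstar) - δ • (f' xk)‖ ^ 2 ≤ (δ * μ - 1) ^ 2 * N := by
        have P1 : 0 ≤ δ * ((μ + L) * a - (G + μ * L * N)) := mul_nonneg hδ (by linarith)
        have P2 : 0 ≤ (δ * (2 - δ * (μ + L))) * (G - μ ^ 2 * N) :=
          mul_nonneg (mul_nonneg hδ (by linarith)) (by linarith)
        nlinarith [P1, P2, hT, show (0:ℝ) < μ + L by linarith]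
      exact le_trans hkey1 (mul_le_mul_of_nonneg_right (le_max_left _ _) hN0)
    · have hkey2 : ‖(xk - xstar) - δ • (f' xk)‖ ^ 2 ≤ (δ * L - 1) ^ 2 * N := by
        have P1 : 0 ≤ δ * ((μ + L) * a - (G + μ * L * N)) := mul_nonneg hδ (by linarith)
        have P2 : 0 ≤ (δ * (δ * (μ + L) - 2)) * (L ^ 2 * N - G) :=
          mul_nonneg (mul_nonneg hδ (by linarith)) (by linarith)
        nlinarith [P1, P2, hT, show (0:ℝ) < μ + L by linarith]
      exact le_trans hkey2 (mul_le_mul_of_nonneg_right (le_max_right _ _) hN0)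
  -- block sum identity
  have hterm : ∀ i, ‖x1 i - xstar‖ ^ 2
      = N - 2 * (δ * ⟪xk - xstar, U i (f' xk)⟫_ℝ) + δ ^ 2 * ‖U i (f' xk)‖ ^ 2 := by
    intro i
    rw [hx1 i]
    have h1 : xk - δ • U i (f' xk) - xstar = (xk - xstar) - δ • U i (f' xk) := by abel
    rw [h1, norm_sub_sq_real, real_inner_smul_right, norm_smul, Real.norm_eq_abs,
      mul_pow, sq_abs, hN]
  have hsum1 : ∑ i, ⟪xk - xstar, U i (f' xk)⟫_ℝ = a := by
    rw [← inner_sum, hUsum, real_inner_comm]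
  have hsum2 : ∑ i, ‖U i (f' xk)‖ ^ 2 = G := hUpyth (f' xk)
  have hS : ∑ i, ‖x1 i - xstar‖ ^ 2 = (n : ℝ) * N - 2 * (δ * a) + δ ^ 2 * G := by
    rw [Finset.sum_congr rfl (fun i _ => hterm i), Finset.sum_add_distrib,
      Finset.sum_sub_distrib, Finset.sum_const, Finset.card_univ, Fintype.card_fin,
      nsmul_eq_mul, ← Finset.mul_sum, ← Finset.mul_sum, ← Finset.mul_sum, hsum1, hsum2]
  have hSsplit : ∑ i, ‖x1 i - xstar‖ ^ 2
      = ((n : ℝ) - 1) * N + ‖(xk - xstar) - δ • (f' xk)‖ ^ 2 := by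
    rw [hS, hT]; ring
  -- max identity
  have hmaxAB : max (((δ * μ - 1) ^ 2 + (n : ℝ) - 1) / (n : ℝ))
      (((δ * L - 1) ^ 2 + (n : ℝ) - 1) / (n : ℝ))
      = (max ((δ * μ - 1) ^ 2) ((δ * L - 1) ^ 2) + (n : ℝ) - 1) / (n : ℝ) := by
    rcases le_total ((δ * μ - 1) ^ 2) ((δ * L - 1) ^ 2) with h | h
    · rw [max_eq_right h, max_eq_right (by gcongr)]
    · rw [max_eq_left h, max_eq_left (by gcongr)]
  rw [hmaxAB]
  calc (n : ℝ)⁻¹ * (∑ i, ‖x1 i - xstar‖ ^ 2)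
      = (((n : ℝ) - 1) * N + ‖(xk - xstar) - δ • (f' xk)‖ ^ 2) / n := by
        rw [hSsplit]; ring
    _ ≤ (((n : ℝ) - 1) * N + max ((δ * μ - 1) ^ 2) ((δ * L - 1) ^ 2) * N) / n := by
        gcongr
    _ = (max ((δ * μ - 1) ^ 2) ((δ * L - 1) ^ 2) + (n : ℝ) - 1) / (n : ℝ) * N := by
        ring
end

section
/- For SGD with primal averaging evaluated at the true running average: y_{k+1} = (d_k/(d_k+1)) y_k + (1/(d_k+1)) x_k, x_{k+1} = x_k - δ_k G(y_{k+1}; i_k), with d_{k+1} = d_k + 1 and 0 ≤ δ_k ≤ 1/L, if f is L-smooth convex and the oracle is unbiased with variance ≤ σ², then d_{k+1} δ_k L (f(y_{k+1}) - f⋆) + (L/2) E_{i_k}‖x_{k+1} - x⋆‖² ≤ d_k δ_k L (f(y_k) - f⋆) + (L/2)‖x_k - x⋆‖² + (L δ_k²/2) σ². -/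
open Finset RealInnerProductSpace

section Aux

variable {E : Type*} [NormedAddCommGroup E] [InnerProductSpace ℝ E] [CompleteSpace E]

/-- Gradient inequality for convex functions. -/
lemma aux_grad_convex_le {f : E → ℝ} (hconv : ConvexOn ℝ Set.univ f)
    {x g : E} (hg : HasGradientAt f g x) (y : E) :
    f x + ⟪g, y - x⟫ ≤ f y := by
  set φ : ℝ → ℝ := fun t => f (x + t • (y - x)) with hφdef
  have hφconv : ConvexOn ℝ Set.univ φ := by
    have h := hconv.comp_affineMap (AffineMap.lineMap (k := ℝ) x y)
    have heq : (f ∘ (AffineMap.lineMap (k := ℝ) x y)) = φ := by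
      funext t
      have hl : (AffineMap.lineMap (k := ℝ) x y) t = x + t • (y - x) := by
        rw [AffineMap.lineMap_apply_module]
        module
      simp only [Function.comp_apply, hl, hφdef]
    have hset : (AffineMap.lineMap (k := ℝ) x y) ⁻¹' Set.univ = Set.univ := by simp
    rw [hset, heq] at h
    exact h
  have hline : HasDerivAt (fun t : ℝ => x + t • (y - x)) (y - x) 0 := by
    simpa using ((hasDerivAt_id (0 : ℝ)).smul_const (y - x)).const_add x
  have hd : HasDerivAt φ ⟪g, y - x⟫ 0 := by
    have hF : HasFDerivAt f (InnerProductSpace.toDual ℝ E g) (x + (0 : ℝ) • (y - x)) := by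
      simpa using (hasGradientAt_iff_hasFDerivAt.mp hg)
    have := hF.comp_hasDerivAt 0 hline
    simp only [InnerProductSpace.toDual_apply_apply] at this
    exact this
  have hslope := hφconv.le_slope_of_hasDerivAt (Set.mem_univ (0 : ℝ))
    (Set.mem_univ (1 : ℝ)) one_pos hd
  have : slope φ 0 1 = f y - f x := by
    simp [slope_def_field, hφdef]
  rw [this] at hslope
  linarith

/-- Descent lemma for functions with Lipschitz gradient. -/
lemma aux_descent {f : E → ℝ} {f' : E → E} (hgrad : ∀ x, HasGradientAt f (f' x) x)
    {L : ℝ} (hL : 0 ≤ L) (hsmooth : ∀ x y, ‖f' x - f' y‖ ≤ L * ‖x - y‖) (x y : E) :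
    f y ≤ f x + ⟪f' x, y - x⟫ + L / 2 * ‖y - x‖ ^ 2 := by
  set v := y - x with hv
  set φ : ℝ → ℝ := fun t => f (x + t • v) - t * ⟪f' x, v⟫ - L * t ^ 2 / 2 * ‖v‖ ^ 2 with hφdef
  have hder : ∀ t : ℝ, HasDerivAt φ
      (⟪f' (x + t • v), v⟫ - ⟪f' x, v⟫ - L * t * ‖v‖ ^ 2) t := by
    intro t
    have hline : HasDerivAt (fun s : ℝ => x + s • v) v t := by
      simpa using ((hasDerivAt_id t).smul_const v).const_add x
    have h1 : HasDerivAt (fun s : ℝ => f (x + s • v)) ⟪f' (x + t • v), v⟫ t := by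
      have hF : HasFDerivAt f (InnerProductSpace.toDual ℝ E (f' (x + t • v))) (x + t • v) :=
        hasGradientAt_iff_hasFDerivAt.mp (hgrad (x + t • v))
      have := hF.comp_hasDerivAt t hline
      simp only [InnerProductSpace.toDual_apply_apply] at this
      exact this
    have h2 : HasDerivAt (fun s : ℝ => s * ⟪f' x, v⟫) ⟪f' x, v⟫ t := by
      simpa using (hasDerivAt_id t).mul_const (⟪f' x, v⟫ : ℝ)
    have h3 : HasDerivAt (fun s : ℝ => L * s ^ 2 / 2 * ‖v‖ ^ 2) (L * t * ‖v‖ ^ 2) t := by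
      have := (((hasDerivAt_pow 2 t).const_mul L).div_const 2).mul_const (‖v‖ ^ 2)
      rw [show L * t * ‖v‖ ^ 2 = L * (((2 : ℕ) : ℝ) * t ^ (2 - 1)) / 2 * ‖v‖ ^ 2 by ring]
      exact this
    exact (h1.sub h2).sub h3
  have hcont : ContinuousOn φ (Set.Icc (0 : ℝ) 1) := fun t _ =>
    ((hder t).differentiableAt).continuousAt.continuousWithinAt
  have hdiff : DifferentiableOn ℝ φ (interior (Set.Icc (0 : ℝ) 1)) := fun t _ =>
    ((hder t).differentiableAt).differentiableWithinAt
  have hanti : AntitoneOn φ (Set.Icc (0 : ℝ) 1) := by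
    apply antitoneOn_of_deriv_nonpos (convex_Icc 0 1) hcont hdiff
    intro t ht
    rw [interior_Icc] at ht
    rw [(hder t).deriv]
    have hCS : ⟪f' (x + t • v) - f' x, v⟫ ≤ ‖f' (x + t • v) - f' x‖ * ‖v‖ :=
      real_inner_le_norm _ _
    have hlip : ‖f' (x + t • v) - f' x‖ ≤ L * (t * ‖v‖) := by
      have := hsmooth (x + t • v) x
      simpa [norm_smul, abs_of_pos ht.1, mul_assoc] using this
    have hinner : ⟪f' (x + t • v), v⟫ - ⟪f' x, v⟫ = ⟪f' (x + t • v) - f' x, v⟫ := by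
      rw [inner_sub_left]
    rw [hinner]
    have : ‖f' (x + t • v) - f' x‖ * ‖v‖ ≤ L * (t * ‖v‖) * ‖v‖ :=
      mul_le_mul_of_nonneg_right hlip (norm_nonneg _)
    nlinarith [norm_nonneg v]
  have h01 := hanti (Set.left_mem_Icc.mpr zero_le_one) (Set.right_mem_Icc.mpr zero_le_one)
    zero_le_one
  have hφ0 : φ 0 = f x := by simp [hφdef]
  have hφ1 : φ 1 = f y - ⟪f' x, v⟫ - L / 2 * ‖v‖ ^ 2 := by
    have hxy : x + (1 : ℝ) • v = y := by rw [hv]; module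
    show f (x + (1:ℝ) • v) - 1 * ⟪f' x, v⟫ - L * 1 ^ 2 / 2 * ‖v‖ ^ 2 = _
    rw [hxy]
    ring
  rw [hφ0, hφ1] at h01
  linarith

/-- The gradient at a global minimizer vanishes. -/
lemma aux_grad_min_zero {f : E → ℝ} {x g : E} (hg : HasGradientAt f g x)
    (hmin : ∀ y, f x ≤ f y) : g = 0 := by
  have hloc : IsLocalMin f x := Filter.Eventually.of_forall hmin
  have hF : HasFDerivAt f (InnerProductSpace.toDual ℝ E g) x :=
    hasGradientAt_iff_hasFDerivAt.mp hg
  have h0 : (InnerProductSpace.toDual ℝ E g) = 0 := by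
    rw [← hF.fderiv]
    exact hloc.fderiv_eq_zero
  have := congrArg (InnerProductSpace.toDual ℝ E).symm h0
  simpa using this

/-- Key inequality: `f y1 - f⋆ ≤ ⟨g, y1 - x⋆⟩ - δ/2 ‖g‖²`. -/
lemma aux_key {f : E → ℝ} {f' : E → E} (hgrad : ∀ x, HasGradientAt f (f' x) x)
    (hconv : ConvexOn ℝ Set.univ f)
    {L : ℝ} (hL : 0 < L) (hsmooth : ∀ x y, ‖f' x - f' y‖ ≤ L * ‖x - y‖)
    {xstar : E} (hmin : ∀ y, f xstar ≤ f y)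
    {δ : ℝ} (hδ0 : 0 ≤ δ) (hδ1 : δ ≤ 1 / L) (y1 : E) :
    f y1 - f xstar ≤ ⟪f' y1, y1 - xstar⟫ - δ / 2 * ‖f' y1‖ ^ 2 := by
  set g := f' y1 with hg
  set h : E → ℝ := fun z => f z - ⟪g, z⟫ with hhdef
  have hstar : f' xstar = 0 := aux_grad_min_zero (hgrad xstar) hmin
  have hgh : ∀ z, HasGradientAt h (f' z - g) z := by
    intro z
    rw [hasGradientAt_iff_hasFDerivAt]
    have h1 : HasFDerivAt f (InnerProductSpace.toDual ℝ E (f' z)) z :=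
      hasGradientAt_iff_hasFDerivAt.mp (hgrad z)
    have h2 : HasFDerivAt (fun w : E => (⟪g, w⟫ : ℝ)) (InnerProductSpace.toDual ℝ E g) z :=
      (InnerProductSpace.toDual ℝ E g).hasFDerivAt
    have := h1.sub h2
    rw [map_sub]
    exact this
  have hhconv : ConvexOn ℝ Set.univ h := by
    have hlin : ConcaveOn ℝ Set.univ (fun w : E => (⟪g, w⟫ : ℝ)) := by
      have := (innerSL ℝ g).toLinearMap.concaveOn convex_univ
      simpa using this
    have := hconv.sub hlin
    exact this
  have hhsmooth : ∀ a b, ‖(f' a - g) - (f' b - g)‖ ≤ L * ‖a - b‖ := by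
    intro a b
    simpa [sub_sub_sub_cancel_right] using hsmooth a b
  -- y1 minimizes h
  have hy1grad : HasGradientAt h 0 y1 := by
    have h0 := hgh y1
    rw [show f' y1 - g = 0 by rw [hg]; abel] at h0
    exact h0
  have hminh : ∀ z, h y1 ≤ h z := by
    intro z
    have hz := aux_grad_convex_le hhconv hy1grad z
    rw [inner_zero_left] at hz
    linarith
  -- descent step for h at xstar
  have hdesc := aux_descent hgh hL.le hhsmooth xstar (xstar + δ • g)
  have hsimp1 : (xstar + δ • g) - xstar = δ • g := by abel
  have hgrad_at_star : f' xstar - g = -g := by rw [hstar]; abel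
  rw [hsimp1, hgrad_at_star] at hdesc
  have hinner1 : ⟪(-g : E), δ • g⟫ = -(δ * ‖g‖ ^ 2) := by
    rw [inner_neg_left, real_inner_smul_right, real_inner_self_eq_norm_sq]
  have hnorm1 : ‖δ • g‖ ^ 2 = δ ^ 2 * ‖g‖ ^ 2 := by
    rw [norm_smul, mul_pow, Real.norm_eq_abs, sq_abs]
  rw [hinner1, hnorm1] at hdesc
  have hchain := le_trans (hminh (xstar + δ • g)) hdesc
  -- h y1 ≤ h xstar - δ‖g‖² + L/2 δ² ‖g‖²
  have hLδ : L * δ ≤ 1 := by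
    rw [div_eq_mul_inv, one_mul] at hδ1
    calc L * δ ≤ L * L⁻¹ := mul_le_mul_of_nonneg_left hδ1 hL.le
    _ = 1 := mul_inv_cancel₀ hL.ne'
  have hquad : L / 2 * (δ ^ 2 * ‖g‖ ^ 2) ≤ δ / 2 * ‖g‖ ^ 2 := by
    nlinarith [sq_nonneg (‖g‖), mul_nonneg hδ0 (sq_nonneg ‖g‖)]
  have hhy1 : h y1 = f y1 - ⟪g, y1⟫ := rfl
  have hhstar : h xstar = f xstar - ⟪g, xstar⟫ := rfl
  have hinner2 : ⟪g, y1 - xstar⟫ = ⟪g, y1⟫ - ⟪g, xstar⟫ := inner_sub_right _ _ _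
  rw [hhy1, hhstar] at hchain
  rw [hinner2]
  linarith

end Aux

set_option maxHeartbeats 1000000 in
/-- One-step potential inequality for SGD evaluated at the true running
average iterate. -/
theorem sgd_true_average_potential_decrease {d n : ℕ} (hn : 0 < n)
    (L σ : ℝ) (hL : 0 < L)
    (f : EuclideanSpace ℝ (Fin d) → ℝ)
    (f' : EuclideanSpace ℝ (Fin d) → EuclideanSpace ℝ (Fin d))
    (hgrad : ∀ x, HasGradientAt f (f' x) x)
    (hconv : ConvexOn ℝ Set.univ f)
    (hsmooth : ∀ x y, ‖f' x - f' y‖ ≤ L * ‖x - y‖)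
    (xstar : EuclideanSpace ℝ (Fin d)) (hmin : ∀ y, f xstar ≤ f y)
    (δ dk : ℝ) (hδ0 : 0 ≤ δ) (hδ1 : δ ≤ 1 / L) (hdk : 0 ≤ dk)
    (xk yk y1 : EuclideanSpace ℝ (Fin d))
    (hy1 : y1 = (dk / (dk + 1)) • yk + (1 / (dk + 1)) • xk)
    (G : Fin n → EuclideanSpace ℝ (Fin d))
    (hunbiased : (n : ℝ)⁻¹ • (∑ i, G i) = f' y1)
    (hvar : (n : ℝ)⁻¹ * (∑ i, ‖G i - f' y1‖ ^ 2) ≤ σ ^ 2)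
    (x1 : Fin n → EuclideanSpace ℝ (Fin d))
    (hx1 : ∀ i, x1 i = xk - δ • G i) :
    (dk + 1) * δ * L * (f y1 - f xstar)
        + L / 2 * ((n : ℝ)⁻¹ * ∑ i, ‖x1 i - xstar‖ ^ 2)
      ≤ dk * δ * L * (f yk - f xstar) + L / 2 * ‖xk - xstar‖ ^ 2
        + (L * δ ^ 2 / 2) * σ ^ 2 := by
  have hn0 : (n : ℝ) ≠ 0 := Nat.cast_ne_zero.mpr hn.ne'
  set g := f' y1 with hgdef
  set v := xk - xstar with hvdef
  -- sum of stochastic gradients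
  have hsumG : ∑ i, G i = (n : ℝ) • g := by
    have := congrArg (fun z => (n : ℝ) • z) hunbiased
    simpa [smul_smul, mul_inv_cancel₀ hn0] using this
  have hsum0 : ∑ i, (G i - g) = 0 := by
    rw [Finset.sum_sub_distrib, hsumG, Finset.sum_const, Finset.card_univ, Fintype.card_fin,
      ← Nat.cast_smul_eq_nsmul ℝ, sub_self]
  -- bias-variance decomposition of the averaged distance
  have hterm : ∀ i, ‖x1 i - xstar‖ ^ 2 =
      ‖v - δ • g‖ ^ 2 - 2 * (δ * ⟪v - δ • g, G i - g⟫) + δ ^ 2 * ‖G i - g‖ ^ 2 := by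
    intro i
    have hrw : x1 i - xstar = (v - δ • g) - δ • (G i - g) := by
      rw [hx1 i, hvdef, smul_sub]
      abel
    rw [hrw, norm_sub_sq_real, real_inner_smul_right, norm_smul, mul_pow,
      Real.norm_eq_abs, sq_abs]
  have hS : ∑ i, ‖x1 i - xstar‖ ^ 2 =
      (n : ℝ) * ‖v - δ • g‖ ^ 2 + δ ^ 2 * ∑ i, ‖G i - g‖ ^ 2 := by
    rw [Finset.sum_congr rfl (fun i _ => hterm i)]
    rw [Finset.sum_add_distrib, Finset.sum_sub_distrib, Finset.sum_const, ← Finset.mul_sum,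
      ← Finset.mul_sum, ← inner_sum, hsum0, ← Finset.mul_sum]
    simp [mul_comm]
  have hnormvg : ‖v - δ • g‖ ^ 2 = ‖v‖ ^ 2 - 2 * (δ * ⟪g, v⟫) + δ ^ 2 * ‖g‖ ^ 2 := by
    rw [norm_sub_sq_real, real_inner_smul_right, norm_smul, mul_pow, Real.norm_eq_abs,
      sq_abs, real_inner_comm]
  -- convexity inequality at yk
  have key1 : f y1 + ⟪g, yk - y1⟫ ≤ f yk := aux_grad_convex_le hconv (hgrad y1) yk
  -- key smoothness/minimizer inequality
  have key2 : f y1 - f xstar ≤ ⟪g, y1 - xstar⟫ - δ / 2 * ‖g‖ ^ 2 :=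
    aux_key hgrad hconv hL hsmooth hmin hδ0 hδ1 y1
  -- decomposition of xk - xstar
  have hne : dk + 1 ≠ 0 := by positivity
  have hxkeq : (dk + 1) • y1 = dk • yk + xk := by
    rw [hy1, smul_add, smul_smul, smul_smul]
    rw [(show (dk + 1) * (dk / (dk + 1)) = dk by field_simp), (show (dk + 1) * (1 / (dk + 1)) = 1 by field_simp)]
    simp
  have hxk' : xk = (dk + 1) • y1 - dk • yk := by
    rw [hxkeq]; abel
  have hvdecomp : v = dk • (y1 - yk) + (y1 - xstar) := by
    rw [hvdef, hxk', add_smul, one_smul, smul_sub]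
    abel
  have hinnerv : ⟪g, v⟫ = dk * ⟪g, y1 - yk⟫ + ⟪g, y1 - xstar⟫ := by
    rw [hvdecomp, inner_add_right, real_inner_smul_right]
  have hinner3 : ⟪g, yk - y1⟫ = -⟪g, y1 - yk⟫ := by
    rw [← inner_neg_right, neg_sub]
  -- main deterministic inequality
  have hT : (dk + 1) * (f y1 - f xstar) + δ / 2 * ‖g‖ ^ 2
      ≤ dk * (f yk - f xstar) + ⟪g, v⟫ := by
    have h1 : dk * (f y1 - f xstar) ≤ dk * (f yk - f xstar) + dk * ⟪g, y1 - yk⟫ := by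
      have := mul_le_mul_of_nonneg_left (by linarith [key1, hinner3] :
        f y1 - f yk ≤ ⟪g, y1 - yk⟫) hdk
      nlinarith
    rw [hinnerv]
    linarith
  -- put everything together
  have hVarNonneg : (0 : ℝ) ≤ ∑ i, ‖G i - g‖ ^ 2 :=
    Finset.sum_nonneg fun i _ => sq_nonneg _
  have hT' := mul_le_mul_of_nonneg_left hT (mul_nonneg hL.le hδ0)
  have hVar' : L * δ ^ 2 / 2 * ((n : ℝ)⁻¹ * ∑ i, ‖G i - g‖ ^ 2) ≤ L * δ ^ 2 / 2 * σ ^ 2 :=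
    mul_le_mul_of_nonneg_left hvar (by positivity)
  have hSavg : (n : ℝ)⁻¹ * ∑ i, ‖x1 i - xstar‖ ^ 2 =
      ‖v - δ • g‖ ^ 2 + δ ^ 2 * ((n : ℝ)⁻¹ * ∑ i, ‖G i - g‖ ^ 2) := by
    rw [hS]
    field_simp
  rw [hSavg, hnormvg]
  nlinarith [hT', hVar', mul_nonneg (mul_nonneg hL.le hδ0) hδ0]
end

section
/- (Accumulation bound for momentum SGD without damping) Let f be L-smooth convex, and consider the scheme y_{k+1} = x_k + (1 - d_k/d_{k+1})(z_k - x_k), x_{k+1} = y_{k+1} - (η_k/d_{k+1}) G(y_{k+1}; i_k), z_{k+1} = z_k - ((d_{k+1}-d_k)/L) G(y_{k+1}; i_k), with d_k = k(k+1)/4, η_k = (k+1)(k+2)/(4L), e_k = (k+1)(k+3)/(4L), under an unbiased oracle with variance ≤ σ². Then d_{k+1} E_{i_k}[f(x_{k+1}) - f⋆] + (L/2) E_{i_k}‖z_{k+1} - x⋆‖² ≤ d_k (f(x_k) - f⋆) + (L/2)‖z_k - x⋆‖² + e_k σ². -/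
open Finset intervalIntegral

section helpers
variable {F : Type*} [NormedAddCommGroup F] [InnerProductSpace ℝ F] [CompleteSpace F]

lemma line_hasDerivAt_s19 (f : F → ℝ) (f' : F → F) (h : ∀ x, HasGradientAt f (f' x) x)
    (y v : F) (t : ℝ) :
    HasDerivAt (fun s : ℝ => f (y + s • v)) (inner ℝ (f' (y + t • v)) v : ℝ) t := by
  have h1 : HasDerivAt (fun s : ℝ => y + s • v) v t := by
    simpa using ((hasDerivAt_id t).smul_const v).const_add y
  have h2 := (hasGradientAt_iff_hasFDerivAt.mp (h (y + t • v)))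
  have := h2.comp_hasDerivAt t h1
  simp at this
  exact this

/-- Subgradient inequality for convex differentiable functions. -/
lemma convex_grad_ineq_s19 (f : F → ℝ) (f' : F → F) (h : ∀ x, HasGradientAt f (f' x) x)
    (hconv : ConvexOn ℝ Set.univ f) (y u : F) :
    f y + inner ℝ (f' y) (u - y) ≤ f u := by
  set v := u - y with hv
  have hder : HasDerivAt (fun s : ℝ => f (y + s • v)) (inner ℝ (f' y) v : ℝ) 0 := by
    simpa using line_hasDerivAt_s19 f f' h y v 0
  have hslope : Filter.Tendsto (slope (fun s : ℝ => f (y + s • v)) 0)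
      (nhdsWithin 0 {(0:ℝ)}ᶜ) (nhds (inner ℝ (f' y) v : ℝ)) :=
    hasDerivAt_iff_tendsto_slope.mp hder
  have hslope' : Filter.Tendsto (slope (fun s : ℝ => f (y + s • v)) 0)
      (nhdsWithin 0 (Set.Ioi (0:ℝ))) (nhds (inner ℝ (f' y) v : ℝ)) :=
    hslope.mono_left (nhdsWithin_mono 0 (by intro x hx; exact ne_of_gt hx))
  have hbound : ∀ᶠ t in nhdsWithin 0 (Set.Ioi (0:ℝ)),
      slope (fun s : ℝ => f (y + s • v)) 0 t ≤ f u - f y := by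
    filter_upwards [Ioc_mem_nhdsGT_of_mem (by norm_num : (0:ℝ) ∈ Set.Ico 0 1)] with t ht
    have ht0 : 0 < t := ht.1
    have ht1 : t ≤ 1 := ht.2
    have hcvx := hconv.2 (Set.mem_univ y) (Set.mem_univ u) (by linarith : (0:ℝ) ≤ 1 - t)
      (le_of_lt ht0) (by ring)
    have hyv : y + t • v = (1 - t) • y + t • u := by
      rw [hv]; module
    have hft : f (y + t • v) ≤ (1 - t) * f y + t * f u := by rw [hyv]; simpa using hcvx
    rw [slope_def_field]
    simp only [zero_smul, add_zero, sub_zero]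
    rw [div_le_iff₀ ht0]
    nlinarith
  have := le_of_tendsto hslope' hbound
  have h0 : (fun s : ℝ => f (y + s • v)) 0 = f y := by simp
  linarith [this]

/-- Descent lemma for L-smooth functions. -/
lemma descent_lemma_s19 (f : F → ℝ) (f' : F → F) (h : ∀ x, HasGradientAt f (f' x) x)
    (L : ℝ) (hL : 0 < L) (hsmooth : ∀ x y, ‖f' x - f' y‖ ≤ L * ‖x - y‖) (y x : F) :
    f x ≤ f y + inner ℝ (f' y) (x - y) + L / 2 * ‖x - y‖ ^ 2 := by
  set v := x - y with hv
  set φ' : ℝ → ℝ := fun t => inner ℝ (f' (y + t • v)) v with hφ'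
  have hder : ∀ t : ℝ, HasDerivAt (fun s : ℝ => f (y + s • v)) (φ' t) t :=
    fun t => line_hasDerivAt_s19 f f' h y v t
  have hcontf' : Continuous f' := by
    have : LipschitzWith (Real.toNNReal L) f' := by
      apply LipschitzWith.of_dist_le_mul
      intro a b
      rw [dist_eq_norm, dist_eq_norm, Real.coe_toNNReal _ hL.le]
      exact hsmooth a b
    exact this.continuous
  have hcont : Continuous φ' := by
    apply Continuous.inner
    · exact hcontf'.comp (by continuity)
    · exact continuous_const
  have hint : ∫ t in (0:ℝ)..1, φ' t = f x - f y := by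
    have := intervalIntegral.integral_eq_sub_of_hasDerivAt
      (fun t _ => hder t) (hcont.intervalIntegrable 0 1)
    simpa [hv] using this
  have hmono : ∫ t in (0:ℝ)..1, φ' t ≤ ∫ t in (0:ℝ)..1, (inner ℝ (f' y) v + L * t * ‖v‖^2 : ℝ) := by
    apply intervalIntegral.integral_mono_on (by norm_num) (hcont.intervalIntegrable 0 1)
      ((by continuity : Continuous fun t : ℝ => (inner ℝ (f' y) v + L * t * ‖v‖^2 : ℝ)).intervalIntegrable 0 1)
    intro t ht
    have ht0 : 0 ≤ t := ht.1
    have key : (inner ℝ (f' (y + t • v) - f' y) v : ℝ) ≤ L * t * ‖v‖^2 := by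
      calc (inner ℝ (f' (y + t • v) - f' y) v : ℝ) ≤ ‖f' (y + t • v) - f' y‖ * ‖v‖ :=
            real_inner_le_norm _ _
        _ ≤ (L * ‖(y + t • v) - y‖) * ‖v‖ := by
            gcongr; exact hsmooth _ _
        _ = L * t * ‖v‖^2 := by
            simp [norm_smul, abs_of_nonneg ht0]; ring
    have : φ' t = inner ℝ (f' y) v + (inner ℝ (f' (y + t • v) - f' y) v : ℝ) := by
      rw [hφ']; simp [inner_sub_left]
    linarith
  have hcalc : ∫ t in (0:ℝ)..1, (inner ℝ (f' y) v + L * t * ‖v‖^2 : ℝ)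
      = inner ℝ (f' y) v + L / 2 * ‖v‖^2 := by
    have heq : (fun t : ℝ => (inner ℝ (f' y) v + L * t * ‖v‖^2 : ℝ))
        = fun t : ℝ => (inner ℝ (f' y) v : ℝ) + (L * ‖v‖^2) * t := by
      funext t; ring
    rw [heq, intervalIntegral.integral_add
      ((continuous_const).intervalIntegrable 0 1)
      ((by continuity : Continuous fun t : ℝ => (L * ‖v‖^2) * t).intervalIntegrable 0 1),
      intervalIntegral.integral_const, intervalIntegral.integral_const_mul,
      integral_id]
    rw [smul_eq_mul]; ring
  have : f x - f y ≤ inner ℝ (f' y) v + L / 2 * ‖v‖^2 := by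
    rw [← hint, ← hcalc] at *; linarith
  linarith

end helpers

lemma keyL_aux (Kv N2 V s2 : ℝ) (hK : 0 ≤ Kv) (hN2 : 0 ≤ N2) (hV : 0 ≤ V) (hVs : V ≤ s2) :
    ((Kv+1)*(Kv+2) + (Kv+1)^2) * (N2 + V) - 2*(Kv+1)*(Kv+2)*N2 ≤ 2*(Kv+1)*(Kv+3)*s2 := by
  have h1 : (0:ℝ) ≤ (Kv+1)*(2*Kv+3) := by nlinarith
  have h2 := mul_le_mul_of_nonneg_left hVs h1
  have h3 : (0:ℝ) ≤ (Kv+1)*N2 := mul_nonneg (by linarith) hN2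
  have h4 : (0:ℝ) ≤ (Kv+1)*s2 := mul_nonneg (by linarith) (hV.trans hVs)
  nlinarith [h2, h3, h4]

set_option maxHeartbeats 1000000 in
/-- One-step potential inequality (with cubic variance accumulation) for a
momentum SGD scheme without damping. -/
theorem momentum_sgd_accumulation {d n : ℕ} (hn : 0 < n)
    (L σ : ℝ) (hL : 0 < L)
    (f : EuclideanSpace ℝ (Fin d) → ℝ)
    (f' : EuclideanSpace ℝ (Fin d) → EuclideanSpace ℝ (Fin d))
    (hgrad : ∀ x, HasGradientAt f (f' x) x)
    (hconv : ConvexOn ℝ Set.univ f)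
    (hsmooth : ∀ x y, ‖f' x - f' y‖ ≤ L * ‖x - y‖)
    (xstar : EuclideanSpace ℝ (Fin d)) (hmin : ∀ y, f xstar ≤ f y)
    (k : ℕ) (dk d1 η e : ℝ)
    (hdk : dk = (k : ℝ) * ((k : ℝ) + 1) / 4)
    (hd1 : d1 = ((k : ℝ) + 1) * ((k : ℝ) + 2) / 4)
    (hη : η = ((k : ℝ) + 1) * ((k : ℝ) + 2) / (4 * L))
    (he : e = ((k : ℝ) + 1) * ((k : ℝ) + 3) / (4 * L))
    (xk zk y1 : EuclideanSpace ℝ (Fin d))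
    (hy1 : y1 = xk + (1 - dk / d1) • (zk - xk))
    (G : Fin n → EuclideanSpace ℝ (Fin d))
    (hunbiased : (n : ℝ)⁻¹ • (∑ i, G i) = f' y1)
    (hvar : (n : ℝ)⁻¹ * (∑ i, ‖G i - f' y1‖ ^ 2) ≤ σ ^ 2)
    (x1 z1 : Fin n → EuclideanSpace ℝ (Fin d))
    (hx1 : ∀ i, x1 i = y1 - (η / d1) • G i)
    (hz1 : ∀ i, z1 i = zk - ((d1 - dk) / L) • G i) :
    d1 * ((n : ℝ)⁻¹ * ∑ i, (f (x1 i) - f xstar))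
        + L / 2 * ((n : ℝ)⁻¹ * ∑ i, ‖z1 i - xstar‖ ^ 2)
      ≤ dk * (f xk - f xstar) + L / 2 * ‖zk - xstar‖ ^ 2 + e * σ ^ 2 := by
  have hK : (0:ℝ) ≤ (k:ℝ) := Nat.cast_nonneg k
  set K : ℝ := (k:ℝ) with hKdef
  have hL' : L ≠ 0 := ne_of_gt hL
  have hnR : (0:ℝ) < (n:ℝ) := by exact_mod_cast hn
  have hnR' : (n:ℝ) ≠ 0 := ne_of_gt hnR
  have hd1pos : 0 < d1 := by rw [hd1]; nlinarith
  have hd1ne : d1 ≠ 0 := ne_of_gt hd1pos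
  have hdknn : 0 ≤ dk := by rw [hdk]; positivity
  have hcnn : 0 ≤ d1 - dk := by rw [hd1, hdk]; nlinarith
  set g : EuclideanSpace ℝ (Fin d) := f' y1 with hg
  set m : ℝ := (n:ℝ)⁻¹ with hm
  have hmn : m * (n:ℝ) = 1 := inv_mul_cancel₀ hnR'
  have hmnn : 0 ≤ m := by positivity
  have hsumG : ∑ i, G i = (n:ℝ) • g := by
    rw [← hunbiased, smul_smul, mul_inv_cancel₀ hnR', one_smul]
  set N2 : ℝ := ‖g‖^2 with hN2def
  set V : ℝ := m * ∑ i, ‖G i - g‖^2 with hVdef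
  have hN2nn : 0 ≤ N2 := by positivity
  have hVnn : 0 ≤ V := by
    apply mul_nonneg hmnn; apply Finset.sum_nonneg; intro i _; positivity
  have hVσ : V ≤ σ^2 := hvar
  have hσnn : (0:ℝ) ≤ σ^2 := le_trans hVnn hVσ
  -- second moment identity
  have hinner_sum_zero : ∑ i, (inner ℝ (G i - g) g : ℝ) = 0 := by
    rw [← sum_inner]
    have : ∑ i, (G i - g) = (0 : EuclideanSpace ℝ (Fin d)) := by
      rw [Finset.sum_sub_distrib, hsumG, Finset.sum_const, Finset.card_univ,
        Fintype.card_fin, Nat.cast_smul_eq_nsmul ℝ, sub_self]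
    rw [this, inner_zero_left]
  have hQ : m * ∑ i, ‖G i‖^2 = N2 + V := by
    have hterm : ∀ i : Fin n, ‖G i‖^2 = ‖G i - g‖^2 + 2 * (inner ℝ (G i - g) g : ℝ) + ‖g‖^2 := by
      intro i
      have := norm_add_sq_real (G i - g) g
      simpa [sub_add_cancel] using this
    have hsum : ∑ i, ‖G i‖^2 = (∑ i, ‖G i - g‖^2) + (n:ℝ) * ‖g‖^2 := by
      rw [Finset.sum_congr rfl (fun i _ => hterm i), Finset.sum_add_distrib,
        Finset.sum_add_distrib, ← Finset.mul_sum, hinner_sum_zero, mul_zero, add_zero,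
        Finset.sum_const, Finset.card_univ, Fintype.card_fin, nsmul_eq_mul]
    calc m * ∑ i, ‖G i‖^2 = m * (∑ i, ‖G i - g‖^2) + (m * (n:ℝ)) * ‖g‖^2 := by
          rw [hsum]; ring
      _ = N2 + V := by rw [hmn, hVdef, hN2def]; ring
  -- Step 1: descent lemma at x1 i
  have hdsc : ∀ i, f (x1 i) ≤ f y1 - (η/d1) * (inner ℝ g (G i) : ℝ)
      + (L/2 * (η/d1)^2) * ‖G i‖^2 := by
    intro i
    have h0 := descent_lemma_s19 f f' hgrad L hL hsmooth y1 (x1 i)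
    have hxy : x1 i - y1 = -((η/d1) • G i) := by rw [hx1 i]; abel
    rw [hxy] at h0
    have h1 : (inner ℝ g (-((η/d1) • G i)) : ℝ) = -((η/d1) * inner ℝ g (G i)) := by
      rw [inner_neg_right, real_inner_smul_right]
    have h2 : ‖-((η/d1) • G i)‖^2 = (η/d1)^2 * ‖G i‖^2 := by
      rw [norm_neg, norm_smul, mul_pow, Real.norm_eq_abs, sq_abs]
    rw [h1, h2] at h0
    linarith
  have hinnerG : ∑ i, (inner ℝ g (G i) : ℝ) = (n:ℝ) * N2 := by
    rw [← inner_sum, hsumG, real_inner_smul_right, real_inner_self_eq_norm_sq]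
  have hsumf : ∑ i, f (x1 i) ≤ (n:ℝ) * f y1 - (η/d1) * ((n:ℝ) * N2)
      + (L/2*(η/d1)^2) * ∑ i, ‖G i‖^2 := by
    calc ∑ i, f (x1 i)
        ≤ ∑ i, (f y1 - (η/d1) * (inner ℝ g (G i):ℝ) + (L/2*(η/d1)^2) * ‖G i‖^2) :=
          Finset.sum_le_sum (fun i _ => hdsc i)
      _ = (n:ℝ) * f y1 - (η/d1) * ((n:ℝ) * N2) + (L/2*(η/d1)^2) * ∑ i, ‖G i‖^2 := by
          rw [Finset.sum_add_distrib, Finset.sum_sub_distrib, Finset.sum_const,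
            Finset.card_univ, Fintype.card_fin, nsmul_eq_mul, ← Finset.mul_sum,
            ← Finset.mul_sum, hinnerG]
  have hSF : m * ∑ i, f (x1 i) ≤ f y1 - (η/d1) * N2 + (L/2*(η/d1)^2) * (N2 + V) := by
    have h := mul_le_mul_of_nonneg_left hsumf hmnn
    calc m * ∑ i, f (x1 i)
        ≤ m * ((n:ℝ) * f y1 - (η/d1) * ((n:ℝ) * N2) + (L/2*(η/d1)^2) * ∑ i, ‖G i‖^2) := h
      _ = (m * (n:ℝ)) * f y1 - (η/d1) * ((m * (n:ℝ)) * N2)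
            + (L/2*(η/d1)^2) * (m * ∑ i, ‖G i‖^2) := by ring
      _ = f y1 - (η/d1) * N2 + (L/2*(η/d1)^2) * (N2 + V) := by rw [hmn, hQ]; ring
  -- Step 2: z update expansion
  set czs : ℝ := inner ℝ (zk - xstar) g with hczsdef
  have hzeq : ∀ i, ‖z1 i - xstar‖^2 = ‖zk - xstar‖^2
      - 2*((d1-dk)/L) * (inner ℝ (zk - xstar) (G i):ℝ) + ((d1-dk)/L)^2 * ‖G i‖^2 := by
    intro i
    rw [hz1 i, sub_right_comm, norm_sub_sq_real, real_inner_smul_right, norm_smul,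
      mul_pow, Real.norm_eq_abs, sq_abs]
    ring
  have hinnerGz : ∑ i, (inner ℝ (zk - xstar) (G i) : ℝ) = (n:ℝ) * czs := by
    rw [← inner_sum, hsumG, real_inner_smul_right, hczsdef]
  have hsumz : ∑ i, ‖z1 i - xstar‖^2 = (n:ℝ) * ‖zk - xstar‖^2
      - 2*((d1-dk)/L) * ((n:ℝ) * czs) + ((d1-dk)/L)^2 * ∑ i, ‖G i‖^2 := by
    rw [Finset.sum_congr rfl (fun i _ => hzeq i), Finset.sum_add_distrib,
      Finset.sum_sub_distrib, Finset.sum_const, Finset.card_univ, Fintype.card_fin,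
      nsmul_eq_mul, ← Finset.mul_sum, ← Finset.mul_sum, hinnerGz]
  have hSZ : m * ∑ i, ‖z1 i - xstar‖^2 = ‖zk - xstar‖^2 - 2*((d1-dk)/L) * czs
      + ((d1-dk)/L)^2 * (N2 + V) := by
    calc m * ∑ i, ‖z1 i - xstar‖^2
        = (m * (n:ℝ)) * ‖zk - xstar‖^2 - 2*((d1-dk)/L) * ((m * (n:ℝ)) * czs)
            + ((d1-dk)/L)^2 * (m * ∑ i, ‖G i‖^2) := by rw [hsumz]; ring
      _ = _ := by rw [hmn, hQ]; ring
  -- Step 3: convexity combination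
  set px : ℝ := inner ℝ g xk with hpx
  set pz : ℝ := inner ℝ g zk with hpz
  set ps : ℝ := inner ℝ g xstar with hps
  set gy : ℝ := inner ℝ g y1 with hgy
  have hA1 : f y1 + (px - gy) ≤ f xk := by
    have := convex_grad_ineq_s19 f f' hgrad hconv y1 xk
    rwa [inner_sub_right] at this
  have hA2 : f y1 + (ps - gy) ≤ f xstar := by
    have := convex_grad_ineq_s19 f f' hgrad hconv y1 xstar
    rwa [inner_sub_right] at this
  have hy1g : gy = px + (1 - dk/d1) * (pz - px) := by
    simp only [hgy, hpx, hpz, hy1, inner_add_right, real_inner_smul_right, inner_sub_right]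
  have hgyd : d1 * gy = dk * px + (d1 - dk) * pz := by
    rw [hy1g]; field_simp; ring
  have hczs : czs = pz - ps := by
    simp only [hczsdef, hpz, hps, inner_sub_left]
    rw [real_inner_comm zk g, real_inner_comm xstar g]
  have hI3 : d1 * f y1 ≤ dk * f xk + (d1 - dk) * f xstar + (d1 - dk) * czs := by
    have h1 := mul_le_mul_of_nonneg_left hA1 hdknn
    have h2 := mul_le_mul_of_nonneg_left hA2 hcnn
    rw [hczs]
    linarith [h1, h2, hgyd]
  -- Final assembly
  have hgoalF : m * ∑ i, (f (x1 i) - f xstar) = m * ∑ i, f (x1 i) - f xstar := by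
    rw [Finset.sum_sub_distrib, Finset.sum_const, Finset.card_univ, Fintype.card_fin,
      nsmul_eq_mul]
    calc m * (∑ i, f (x1 i) - (n:ℝ) * f xstar)
        = m * ∑ i, f (x1 i) - (m * (n:ℝ)) * f xstar := by ring
      _ = _ := by rw [hmn]; ring
  have E1 : d1 * (m * ∑ i, f (x1 i)) ≤ d1 * f y1 - η * N2
      + ((K+1)*(K+2)/(8*L)) * (N2 + V) := by
    have h := mul_le_mul_of_nonneg_left hSF hd1pos.le
    calc d1 * (m * ∑ i, f (x1 i))
        ≤ d1 * (f y1 - (η/d1) * N2 + (L/2*(η/d1)^2) * (N2 + V)) := h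
      _ = d1 * f y1 - η * N2 + ((K+1)*(K+2)/(8*L)) * (N2 + V) := by
          rw [hη, hd1]; field_simp; ring
  have E2 : L/2 * (m * ∑ i, ‖z1 i - xstar‖^2) = L/2 * ‖zk - xstar‖^2 - (d1-dk) * czs
      + ((K+1)^2/(8*L)) * (N2 + V) := by
    rw [hSZ, hd1, hdk]; field_simp; ring
  have hkey : ((K+1)*(K+2)/(8*L)) * (N2 + V) + ((K+1)^2/(8*L)) * (N2 + V) - η * N2
      ≤ e * σ^2 := by
    have keyL := keyL_aux K N2 V (σ^2) hK hN2nn hVnn hVσ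
    have h8L : (0:ℝ) < 8*L := by linarith
    have hdiv := (div_le_div_iff_of_pos_right h8L).mpr keyL
    calc ((K+1)*(K+2)/(8*L)) * (N2 + V) + ((K+1)^2/(8*L)) * (N2 + V) - η * N2
        = (((K+1)*(K+2) + (K+1)^2) * (N2 + V) - 2*(K+1)*(K+2)*N2) / (8*L) := by
          rw [hη]; field_simp; ring
      _ ≤ (2*(K+1)*(K+3)*σ^2) / (8*L) := hdiv
      _ = e * σ^2 := by rw [he]; field_simp; ring
  rw [hgoalF]
  linarith [E1, E2, hI3, hkey]
end
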